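/- arXiv:2205.09589 — 3 statements merged into one kernel-verified Lean document; each statement's English description precedes it below -/
import Mathlib

section
/- Suppose for each p ∈ C the map q ↦ Φ(v, q) is differentiable and concave in the second argument. Then L_Ω^Φ(v, p) ≤ L_Ω(∇₂Φ(v, p), p), where L_Ω(u, p) := Ω*(u) + Ω(p) − ⟨u, p⟩ is the usual Fenchel-Young loss with Ω*(u) := sup_{q ∈ C} (⟨u, q⟩ − Ω(q)). -/
/-- Concave differentiable functions lie below their tangent planes. -/
lemma concave_le_tangent {k : ℕ} (f : EuclideanSpace ℝ (Fin k) → ℝ)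
    (hdiff : Differentiable ℝ f) (hconc : ConcaveOn ℝ Set.univ f)
    (p q : EuclideanSpace ℝ (Fin k)) :
    f q ≤ f p + (inner ℝ (gradient f p) (q - p) : ℝ) := by
  set g : ℝ → ℝ := fun t => f (p + t • (q - p)) with hg
  have hgconc : ConcaveOn ℝ Set.univ g := by
    have := hconc.comp_affineMap
      (AffineMap.mk (fun t : ℝ => p + t • (q - p))
        (LinearMap.toSpanSingleton ℝ _ (q - p))
        (by intro u c; simp [LinearMap.toSpanSingleton_apply]; module))
    simp at this; exact this
  have hline : HasDerivAt (fun t : ℝ => p + t • (q - p)) (q - p) 0 := by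
    have h1 : HasDerivAt (fun t : ℝ => t • (q - p)) ((1:ℝ) • (q - p)) 0 :=
      (hasDerivAt_id (0:ℝ)).smul_const (q - p)
    simpa using h1.const_add p
  have hgrad : HasFDerivAt f ((InnerProductSpace.toDual ℝ _) (gradient f p)) p :=
    (hasGradientAt_iff_hasFDerivAt.mp (hdiff p).hasGradientAt)
  have hp0 : p + (0:ℝ) • (q - p) = p := by simp
  have hgd : HasDerivAt g ((inner ℝ (gradient f p) (q - p) : ℝ)) 0 := by
    have := (hp0 ▸ hgrad).comp_hasDerivAt 0 hline
    rw [InnerProductSpace.toDual_apply_apply, hp0] at this; exact this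
  have hslope := hgconc.slope_le_of_hasDerivAt (Set.mem_univ (0:ℝ)) (Set.mem_univ (1:ℝ))
    zero_lt_one hgd
  have : slope g 0 1 = f q - f p := by
    simp [slope_def_field, hg]
  rw [this] at hslope
  linarith

/-- Linearization upper bound: L_Ω^Φ(v, p) ≤ L_Ω(∇₂Φ(v, p), p) for concave Φ(v,·). -/
theorem stmt_10 {d k : ℕ} (C : Set (EuclideanSpace ℝ (Fin k))) (hC : C.Nonempty)
    (hCconv : Convex ℝ C)
    (Ω : EuclideanSpace ℝ (Fin k) → ℝ)
    (Φ : (Fin d → ℝ) → EuclideanSpace ℝ (Fin k) → ℝ)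
    (v : Fin d → ℝ)
    (hdiff : Differentiable ℝ (fun q => Φ v q))
    (hconc : ConcaveOn ℝ Set.univ (fun q => Φ v q))
    (hbdd1 : BddAbove ((fun q => Φ v q - Ω q) '' C))
    (p : EuclideanSpace ℝ (Fin k)) (hp : p ∈ C)
    (hbdd2 : BddAbove
      ((fun q => (inner ℝ (gradient (fun q' => Φ v q') p) q : ℝ) - Ω q) '' C)) :
    sSup ((fun q => Φ v q - Ω q) '' C) + Ω p - Φ v p
      ≤ sSup ((fun q => (inner ℝ (gradient (fun q' => Φ v q') p) q : ℝ) - Ω q) '' C)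
        + Ω p - (inner ℝ (gradient (fun q' => Φ v q') p) p : ℝ) := by
  set u := gradient (fun q' => Φ v q') p with hu
  have key : sSup ((fun q => Φ v q - Ω q) '' C)
      ≤ sSup ((fun q => (inner ℝ u q : ℝ) - Ω q) '' C) + (Φ v p - (inner ℝ u p : ℝ)) := by
    apply csSup_le (hC.image _)
    rintro x ⟨q, hq, rfl⟩
    dsimp only
    have h1 : Φ v q ≤ Φ v p + (inner ℝ u (q - p) : ℝ) :=
      concave_le_tangent (fun q' => Φ v q') hdiff hconc p q
    have h2 : (inner ℝ u q : ℝ) - Ω q ≤ sSup ((fun q => (inner ℝ u q : ℝ) - Ω q) '' C) :=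
      le_csSup hbdd2 ⟨q, hq, rfl⟩
    have h3 : (inner ℝ u (q - p) : ℝ) = (inner ℝ u q : ℝ) - (inner ℝ u p : ℝ) := by
      rw [inner_sub_right]
    linarith
  linarith
end

section
/- Assume for each v the function p ↦ Φ(v, p) − Ω(p) is γ-strongly concave on a compact convex set C with unique maximizer p*(v), and Φ is β-smooth jointly in (v, p) (its gradient is β-Lipschitz). Then the map v ↦ p*(v) is (β/γ)-Lipschitz: ‖p*(v₂) − p*(v₁)‖ ≤ (β/γ)‖v₂ − v₁‖ for all v₁, v₂. -/
open InnerProductSpace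

/-- Quadratic growth at a minimizer of a strongly convex function. -/
lemma strong_min_sq {E : Type*} [NormedAddCommGroup E] [NormedSpace ℝ E]
    {C : Set E} {γ : ℝ} (hγ : 0 < γ) {f : E → ℝ}
    (hf : StrongConvexOn C γ f) {p q : E} (hp : p ∈ C) (hq : q ∈ C)
    (hmin : ∀ x ∈ C, f q ≤ f x) :
    f q + γ / 2 * ‖p - q‖ ^ 2 ≤ f p := by
  set K : ℝ := γ / 2 * ‖p - q‖ ^ 2 with hK
  have hK0 : 0 ≤ K := by positivity
  refine le_of_forall_pos_le_add fun ε hε => ?_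
  set t : ℝ := min (ε / (K + 1)) (1/2) with ht
  have ht0 : 0 < t := lt_min (by positivity) (by norm_num)
  have ht1 : t < 1 := lt_of_le_of_lt (min_le_right _ _) (by norm_num)
  have key := hf.2 hp hq ht0.le (by linarith : (0:ℝ) ≤ 1 - t) (by ring)
  have hmem : t • p + (1 - t) • q ∈ C := hf.1 hp hq ht0.le (by linarith) (by ring)
  have h1 : f q ≤ f (t • p + (1 - t) • q) := hmin _ hmem
  -- f q ≤ t f p + (1-t) f q - t(1-t)K
  have h2 : f q ≤ t * f p + (1 - t) * f q - t * (1 - t) * K := by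
    simpa [smul_eq_mul, hK] using h1.trans key
  have h3 : f q + (1 - t) * K ≤ f p := by
    have : t * (f q + (1 - t) * K) ≤ t * f p := by nlinarith
    exact le_of_mul_le_mul_left (by linarith) ht0
  have htK : t * K ≤ ε := by
    have h4 : t ≤ ε / (K + 1) := min_le_left _ _
    have : t * K ≤ (ε / (K + 1)) * (K + 1) := by nlinarith
    rw [div_mul_cancel₀] at this
    · linarith
    · positivity
  nlinarith

/-- Lipschitzness of the regularized argmax map. -/
theorem stmt_17 {d k : ℕ} (C : Set (EuclideanSpace ℝ (Fin k)))
    (hCcompact : IsCompact C) (hCconv : Convex ℝ C)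
    (γ β : ℝ) (hγ : 0 < γ) (hβ : 0 < β)
    (Ω : EuclideanSpace ℝ (Fin k) → ℝ) (hΩ : StrongConvexOn C γ Ω)
    (Φ : EuclideanSpace ℝ (Fin d) → EuclideanSpace ℝ (Fin k) → ℝ)
    (hdiff : ∀ v, Differentiable ℝ (fun p => Φ v p))
    (hgradlip : ∀ v₁ v₂ p,
      ‖gradient (fun p' => Φ v₂ p') p - gradient (fun p' => Φ v₁ p') p‖
        ≤ β * ‖v₂ - v₁‖)
    (hconc : ∀ v, ConcaveOn ℝ C (fun p => Φ v p))
    (pstar : EuclideanSpace ℝ (Fin d) → EuclideanSpace ℝ (Fin k))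
    (hmem : ∀ v, pstar v ∈ C)
    (hmax : ∀ v, ∀ p ∈ C, Φ v p - Ω p ≤ Φ v (pstar v) - Ω (pstar v))
    (huniq : ∀ v, ∀ p ∈ C, Φ v p - Ω p = Φ v (pstar v) - Ω (pstar v) → p = pstar v) :
    ∀ v₁ v₂, ‖pstar v₂ - pstar v₁‖ ≤ β / γ * ‖v₂ - v₁‖ := by
  intro v₁ v₂
  set p₁ := pstar v₁
  set p₂ := pstar v₂
  -- the strongly convex objectives
  have hg : ∀ v, StrongConvexOn C γ (fun p => Ω p - Φ v p) := by
    intro v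
    have := hΩ.sub ((hconc v).uniformConcaveOn_zero)
    simpa [StrongConvexOn, Pi.sub_def] using this
  have hmin : ∀ v, ∀ p ∈ C, (fun p => Ω p - Φ v p) (pstar v) ≤ (fun p => Ω p - Φ v p) p := by
    intro v p hp
    have := hmax v p hp
    simp only
    linarith
  have h1 := strong_min_sq hγ (hg v₁) (hmem v₂) (hmem v₁) (hmin v₁)
  have h2 := strong_min_sq hγ (hg v₂) (hmem v₁) (hmem v₂) (hmin v₂)
  rw [show ‖p₁ - p₂‖ = ‖p₂ - p₁‖ from norm_sub_rev _ _] at h2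
  -- g(p) = Φ v₂ p - Φ v₁ p is (β‖v₂-v₁‖)-Lipschitz via MVT
  have hgrad : ∀ p, ‖fderiv ℝ (fun p' => Φ v₂ p' - Φ v₁ p') p‖ ≤ β * ‖v₂ - v₁‖ := by
    intro p
    have hd2 := (hdiff v₂) p
    have hd1 := (hdiff v₁) p
    rw [fderiv_fun_sub hd2 hd1]
    have := hgradlip v₁ v₂ p
    rwa [gradient, gradient, ← map_sub, LinearIsometryEquiv.norm_map] at this
  have hmvt : Φ v₂ p₂ - Φ v₁ p₂ - (Φ v₂ p₁ - Φ v₁ p₁) ≤ β * ‖v₂ - v₁‖ * ‖p₂ - p₁‖ := by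
    have := convex_univ.norm_image_sub_le_of_norm_fderiv_le
      (f := fun p' => Φ v₂ p' - Φ v₁ p')
      (fun x _ => ((hdiff v₂) x).sub ((hdiff v₁) x))
      (fun x _ => hgrad x) (Set.mem_univ p₁) (Set.mem_univ p₂)
    calc Φ v₂ p₂ - Φ v₁ p₂ - (Φ v₂ p₁ - Φ v₁ p₁)
        ≤ ‖(Φ v₂ p₂ - Φ v₁ p₂) - (Φ v₂ p₁ - Φ v₁ p₁)‖ := le_abs_self _
      _ ≤ β * ‖v₂ - v₁‖ * ‖p₂ - p₁‖ := this
  -- combine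
  have hkey : γ * ‖p₂ - p₁‖ ^ 2 ≤ β * ‖v₂ - v₁‖ * ‖p₂ - p₁‖ := by
    simp only [p₁, p₂] at h1 h2 hmvt ⊢
    nlinarith
  rcases eq_or_lt_of_le (norm_nonneg (p₂ - p₁)) with h0 | h0
  · rw [← h0]
    positivity
  · rw [div_mul_eq_mul_div, le_div_iff₀ hγ]
    calc ‖p₂ - p₁‖ * γ = γ * ‖p₂ - p₁‖ ^ 2 / ‖p₂ - p₁‖ := by
          field_simp
      _ ≤ β * ‖v₂ - v₁‖ * ‖p₂ - p₁‖ / ‖p₂ - p₁‖ := by gcongr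
      _ = β * ‖v₂ - v₁‖ := by field_simp
end

section
/- Let Φ(v, p) = ⟨v, φ(p)⟩ be a linear-concave energy and L_Ω^Φ(v, y) = Ω^Φ(v) + Ω(y) − ⟨v, φ(y)⟩. Suppose the pointwise surrogate risk ℓ(v) := E_{Y∼q}[L_Ω^Φ(v, Y)] is M-smooth in v, nonnegative, and ∇Ω^Φ(v) = φ(p^Φ_Ω(v)) where p^Φ_Ω(v) is the maximizer. Then ℓ(v) − inf_{v'} ℓ(v') ≥ (1/(2M))‖φ(p^Φ_Ω(v)) − E_{Y∼q}[φ(Y)]‖². -/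
open InnerProductSpace

/-- Descent lemma consequence: excess risk lower bound by squared gradient norm. -/
theorem aux_descent {F : Type*} [NormedAddCommGroup F] [InnerProductSpace ℝ F]
    [CompleteSpace F] (f : F → ℝ) (hdiff : Differentiable ℝ f) (M : ℝ) (hM : 0 < M)
    (hsmooth : ∀ v w, ‖gradient f v - gradient f w‖ ≤ M * ‖v - w‖)
    (hbdd : BddBelow (Set.range f)) (v : F) :
    f v - sInf (Set.range f) ≥ 1 / (2 * M) * ‖gradient f v‖ ^ 2 := by
  set g := gradient f v with hg
  set c : ℝ → F := fun t => v - t • g with hc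
  have hcderiv : ∀ t : ℝ, HasDerivAt c (-g) t := by
    intro t
    simpa using ((hasDerivAt_id t).smul_const g).const_sub v
  set h : ℝ → ℝ := fun t => f (c t) + t * ‖g‖ ^ 2 - M * ‖g‖ ^ 2 * t ^ 2 / 2 with hh
  have hhderiv : ∀ t : ℝ,
      HasDerivAt h ((inner ℝ (gradient f (c t)) (-g) : ℝ) + ‖g‖ ^ 2 - M * ‖g‖ ^ 2 * t) t := by
    intro t
    have h1 : HasDerivAt (fun t => f (c t)) (inner ℝ (gradient f (c t)) (-g) : ℝ) t := by
      have := ((hdiff (c t)).hasGradientAt.hasFDerivAt).comp_hasDerivAt t (hcderiv t)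
      exact this.congr_deriv (by rw [InnerProductSpace.toDual_apply_apply])
    have h2 : HasDerivAt (fun t : ℝ => t * ‖g‖ ^ 2) (‖g‖ ^ 2) t := by
      simpa using (hasDerivAt_id t).mul_const (‖g‖ ^ 2)
    have h3 : HasDerivAt (fun t : ℝ => M * ‖g‖ ^ 2 * t ^ 2 / 2) (M * ‖g‖ ^ 2 * t) t := by
      have := ((hasDerivAt_pow 2 t).const_mul (M * ‖g‖ ^ 2)).div_const 2
      refine this.congr_deriv ?_
      push_cast
      ring
    exact (h1.add h2).sub h3
  have hanti : AntitoneOn h (Set.Icc 0 (1 / M)) := by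
    refine antitoneOn_of_deriv_nonpos (convex_Icc _ _) ?_ ?_ ?_
    · exact fun t _ => ((hhderiv t).differentiableAt).continuousAt.continuousWithinAt
    · exact fun t _ => ((hhderiv t).differentiableAt).differentiableWithinAt
    · intro t ht
      rw [interior_Icc] at ht
      rw [(hhderiv t).deriv]
      have hinner : (inner ℝ g g : ℝ) - (inner ℝ (gradient f (c t)) g : ℝ) ≤ M * t * ‖g‖ ^ 2 := by
        have h1 : (inner ℝ (g - gradient f (c t)) g : ℝ) ≤ ‖g - gradient f (c t)‖ * ‖g‖ :=
          real_inner_le_norm _ _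
        have h2 : ‖g - gradient f (c t)‖ ≤ M * (t * ‖g‖) := by
          have := hsmooth v (c t)
          rw [← hg] at this
          have hvc : v - c t = t • g := by simp [hc]
          rw [hvc, norm_smul, Real.norm_eq_abs, abs_of_pos ht.1] at this
          linarith [this]
        have h3 : ‖g - gradient f (c t)‖ * ‖g‖ ≤ M * (t * ‖g‖) * ‖g‖ :=
          mul_le_mul_of_nonneg_right h2 (norm_nonneg _)
        rw [inner_sub_left] at h1
        nlinarith
      have hgg : (inner ℝ g g : ℝ) = ‖g‖ ^ 2 := real_inner_self_eq_norm_sq g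
      rw [inner_neg_right]
      nlinarith
  have h0mem : (0 : ℝ) ∈ Set.Icc (0 : ℝ) (1 / M) := ⟨le_refl _, by positivity⟩
  have h1mem : (1 / M : ℝ) ∈ Set.Icc (0 : ℝ) (1 / M) := ⟨by positivity, le_refl _⟩
  have hle : h (1 / M) ≤ h 0 := hanti h0mem h1mem (by positivity)
  have hc0 : c 0 = v := by simp [hc]
  have hM' : M ≠ 0 := hM.ne'
  have hval : f (c (1 / M)) + 1 / (2 * M) * ‖g‖ ^ 2 ≤ f v := by
    have h0 : h 0 = f v := by simp [hh, hc0]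
    have e : 1 / M * ‖g‖ ^ 2 - M * ‖g‖ ^ 2 * (1 / M) ^ 2 / 2 = 1 / (2 * M) * ‖g‖ ^ 2 := by
      field_simp
      ring
    have h1 : h (1 / M) = f (c (1 / M)) + 1 / (2 * M) * ‖g‖ ^ 2 := by
      simp only [hh]
      linarith [e]
    calc f (c (1 / M)) + 1 / (2 * M) * ‖g‖ ^ 2 = h (1 / M) := h1.symm
      _ ≤ h 0 := hle
      _ = f v := h0
  have hinf : sInf (Set.range f) ≤ f (c (1 / M)) := csInf_le hbdd ⟨_, rfl⟩
  linarith

/-- Bound on the pointwise surrogate excess risk for linear-concave energies. -/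
theorem stmt_18 {d k : ℕ} (Y : Finset (EuclideanSpace ℝ (Fin k)))
    (hY : Y.Nonempty) (q : EuclideanSpace ℝ (Fin k) → ℝ)
    (hq0 : ∀ y ∈ Y, 0 ≤ q y) (hq1 : ∑ y ∈ Y, q y = 1)
    (φ : EuclideanSpace ℝ (Fin k) → EuclideanSpace ℝ (Fin d))
    (Ω : EuclideanSpace ℝ (Fin k) → ℝ)
    (Ωφ : EuclideanSpace ℝ (Fin d) → ℝ)
    (pstar : EuclideanSpace ℝ (Fin d) → EuclideanSpace ℝ (Fin k))
    (hΩφdiff : Differentiable ℝ Ωφ)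
    (hgrad : ∀ v, gradient Ωφ v = φ (pstar v))
    (L : EuclideanSpace ℝ (Fin d) → EuclideanSpace ℝ (Fin k) → ℝ)
    (hL : ∀ v y, L v y = Ωφ v + Ω y - (inner ℝ v (φ y) : ℝ))
    (ℓ : EuclideanSpace ℝ (Fin d) → ℝ)
    (hℓ : ∀ v, ℓ v = ∑ y ∈ Y, q y * L v y)
    (M : ℝ) (hM : 0 < M)
    (hsmooth : ∀ v₁ v₂, ‖gradient ℓ v₁ - gradient ℓ v₂‖ ≤ M * ‖v₁ - v₂‖)
    (hnonneg : ∀ v, 0 ≤ ℓ v) :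
    ∀ v, ℓ v - sInf (Set.range ℓ)
      ≥ 1 / (2 * M) * ‖φ (pstar v) - ∑ y ∈ Y, q y • φ y‖ ^ 2 := by
  intro v
  set m : EuclideanSpace ℝ (Fin d) := ∑ y ∈ Y, q y • φ y with hm
  set cst : ℝ := ∑ y ∈ Y, q y * Ω y with hcst
  have hform : ℓ = fun u => Ωφ u + cst - (inner ℝ u m : ℝ) := by
    funext u
    rw [hℓ]
    have hinner : (inner ℝ u m : ℝ) = ∑ y ∈ Y, q y * (inner ℝ u (φ y) : ℝ) := by
      rw [hm, inner_sum]
      exact Finset.sum_congr rfl fun y _ => real_inner_smul_right _ _ _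
    simp only [hL]
    rw [hinner, hcst]
    calc ∑ y ∈ Y, q y * (Ωφ u + Ω y - inner ℝ u (φ y))
        = ∑ y ∈ Y, (q y * Ωφ u + q y * Ω y - q y * inner ℝ u (φ y)) := by
          exact Finset.sum_congr rfl fun y _ => by ring
      _ = (∑ y ∈ Y, q y) * Ωφ u + ∑ y ∈ Y, q y * Ω y - ∑ y ∈ Y, q y * inner ℝ u (φ y) := by
          rw [Finset.sum_sub_distrib, Finset.sum_add_distrib, Finset.sum_mul]
      _ = Ωφ u + ∑ y ∈ Y, q y * Ω y - ∑ y ∈ Y, q y * inner ℝ u (φ y) := by rw [hq1, one_mul]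
  have hgradℓ : ∀ u, HasGradientAt ℓ (φ (pstar u) - m) u := by
    intro u
    have h1 : HasFDerivAt Ωφ (toDual ℝ _ (φ (pstar u))) u := by
      have := (hΩφdiff u).hasGradientAt
      rw [hgrad u] at this
      exact this.hasFDerivAt
    have h2 : HasFDerivAt (fun w : EuclideanSpace ℝ (Fin d) => (inner ℝ w m : ℝ))
        (toDual ℝ (EuclideanSpace ℝ (Fin d)) m) u := by
      have heq : (fun w : EuclideanSpace ℝ (Fin d) => (inner ℝ w m : ℝ))
          = ⇑(toDual ℝ (EuclideanSpace ℝ (Fin d)) m) := by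
        funext w
        rw [InnerProductSpace.toDual_apply_apply, real_inner_comm]
      rw [heq]
      exact (toDual ℝ (EuclideanSpace ℝ (Fin d)) m).hasFDerivAt
    have h3 : HasFDerivAt ℓ (toDual ℝ (EuclideanSpace ℝ (Fin d)) (φ (pstar u) - m)) u := by
      rw [hform, map_sub]
      exact (h1.add_const cst).sub h2
    exact hasGradientAt_iff_hasFDerivAt.mpr h3
  have hdiff : Differentiable ℝ ℓ := fun u => (hgradℓ u).differentiableAt
  have hgradval : ∀ u, gradient ℓ u = φ (pstar u) - m := fun u => (hgradℓ u).gradient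
  have hbdd : BddBelow (Set.range ℓ) := ⟨0, by rintro _ ⟨u, rfl⟩; exact hnonneg u⟩
  have := aux_descent ℓ hdiff M hM hsmooth hbdd v
  rwa [hgradval v] at this
end
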